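/- Alternative version of Farkas' lemma: For any m×n real matrix K, exactly one of the following holds: (i) there exists x ∈ ℝ^n with x ≥ 0 componentwise and Kx ≫ 0 (all entries strictly positive); (ii) there exists y ∈ ℝ^m with y ≥ 0, y ≠ 0, and yᵀK ≤ 0 componentwise. -/

import Mathlib

open Matrix

theorem farkas_lemma_alternative
    (n m : ℕ) (K : Matrix (Fin m) (Fin n) ℝ) :
    Xor'
      (∃ x : Fin n → ℝ, (∀ i, 0 ≤ x i) ∧ ∀ i, 0 < K.mulVec x i)
      (∃ y : Fin m → ℝ, (∀ i, 0 ≤ y i) ∧ y ≠ 0 ∧ ∀ j, K.vecMul y j ≤ 0) := by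
  have hnotboth : ¬ ((∃ x : Fin n → ℝ, (∀ i, 0 ≤ x i) ∧ ∀ i, 0 < K.mulVec x i) ∧
      (∃ y : Fin m → ℝ, (∀ i, 0 ≤ y i) ∧ y ≠ 0 ∧ ∀ j, K.vecMul y j ≤ 0)) := by
    rintro ⟨⟨x, hx0, hxpos⟩, ⟨y, hy0, hyne, hyK⟩⟩
    have hpos : 0 < y ⬝ᵥ K.mulVec x := by
      apply Finset.sum_pos'
      · intro i _
        exact mul_nonneg (hy0 i) (hxpos i).le
      · obtain ⟨i, hi⟩ := Function.ne_iff.mp hyne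
        exact ⟨i, Finset.mem_univ i, mul_pos (lt_of_le_of_ne (hy0 i) (Ne.symm hi)) (hxpos i)⟩
    have hle : y ⬝ᵥ K.mulVec x ≤ 0 := by
      rw [Matrix.dotProduct_mulVec]
      apply Finset.sum_nonpos
      intro j _
      exact mul_nonpos_of_nonpos_of_nonneg (hyK j) (hx0 j)
    exact absurd (hle.trans_lt hpos) (lt_irrefl _)
  have hor : (∃ x : Fin n → ℝ, (∀ i, 0 ≤ x i) ∧ ∀ i, 0 < K.mulVec x i) ∨
      (∃ y : Fin m → ℝ, (∀ i, 0 ≤ y i) ∧ y ≠ 0 ∧ ∀ j, K.vecMul y j ≤ 0) := by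
    by_cases hB : ∃ y : Fin m → ℝ, (∀ i, 0 ≤ y i) ∧ y ≠ 0 ∧ ∀ j, K.vecMul y j ≤ 0
    · exact Or.inr hB
    left
    -- set up separation
    set s : Set (Fin n → ℝ) := (fun y => K.vecMul y) '' stdSimplex ℝ (Fin m) with hs_def
    set t : Set (Fin n → ℝ) := {v | ∀ j, v j ≤ 0} with ht_def
    have hsconv : Convex ℝ s := by
      have := (convex_stdSimplex ℝ (Fin m)).linear_image K.vecMulLinear
      simpa [Matrix.coe_vecMulLinear] using this
    have hscomp : IsCompact s := by
      have hc : Continuous fun y => K.vecMul y := by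
        have := K.vecMulLinear.continuous_of_finiteDimensional
        simpa [Matrix.coe_vecMulLinear] using this
      exact (isCompact_stdSimplex ℝ (Fin m)).image hc
    have htconv : Convex ℝ t := by
      have : t = Set.pi Set.univ (fun _ : Fin n => Set.Iic (0 : ℝ)) := by
        ext v; simp only [ht_def, Set.mem_setOf_eq, Set.mem_pi, Set.mem_univ, Set.mem_Iic, forall_const]
      rw [this]
      exact convex_pi fun _ _ => convex_Iic 0
    have htclosed : IsClosed t := by
      have : t = Set.pi Set.univ (fun _ : Fin n => Set.Iic (0 : ℝ)) := by
        ext v; simp only [ht_def, Set.mem_setOf_eq, Set.mem_pi, Set.mem_univ, Set.mem_Iic, forall_const]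
      rw [this]
      exact isClosed_set_pi fun _ _ => isClosed_Iic
    have hdisj : Disjoint s t := by
      rw [Set.disjoint_left]
      rintro a ⟨y, hy, rfl⟩ hat
      refine hB ⟨y, fun i => hy.1 i, ?_, hat⟩
      intro h0
      have := hy.2
      rw [h0] at this
      simp at this
    obtain ⟨f, u, v, hfs, huv, hft⟩ :=
      geometric_hahn_banach_compact_closed hsconv hscomp htconv htclosed hdisj
    have hv0 : v < 0 := by
      have h0t : (0 : Fin n → ℝ) ∈ t := fun j => le_refl 0
      simpa using hft 0 h0t
    -- the candidate x
    set e : Fin n → (Fin n → ℝ) := fun i j => if i = j then 1 else 0 with he_def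
    set x : Fin n → ℝ := fun j => -f (e j) with hx_def
    have hxnn : ∀ j, 0 ≤ x j := by
      intro j
      by_contra h
      push_neg at h
      -- x j < 0, i.e. f (e j) > 0
      have hfej : 0 < f (e j) := by simpa [hx_def] using h
      set c : ℝ := (1 - v) / f (e j) with hc_def
      have hcpos : 0 < c := div_pos (by linarith) hfej
      have hmem : (-c) • e j ∈ t := by
        intro k
        simp only [Pi.smul_apply, he_def, smul_eq_mul]
        by_cases hjk : j = k <;> simp [hjk] <;> nlinarith
      have := hft _ hmem
      rw [f.map_smul] at this
      simp only [smul_eq_mul] at this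
      have : v < -c * f (e j) := this
      have hce : c * f (e j) = 1 - v := by
        rw [hc_def]; field_simp
      linarith
    refine ⟨x, hxnn, ?_⟩
    intro i
    -- K.mulVec x i = - f (row i) and row i ∈ s
    set d : Fin m → (Fin m → ℝ) := fun i j => if i = j then 1 else 0 with hd_def
    have hrow : K.vecMul (d i) ∈ s := ⟨d i, ?_, rfl⟩
    swap
    · constructor
      · intro k; simp only [hd_def]; split <;> norm_num
      · simp [hd_def, Finset.sum_ite_eq, Finset.mem_univ]
    have hlt : f (K.vecMul (d i)) < u := hfs _ hrow
    have hexp : f (K.vecMul (d i)) = ∑ j, K.vecMul (d i) j * f (e j) := by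
      have := (f : (Fin n → ℝ) →ₗ[ℝ] ℝ).pi_apply_eq_sum_univ (K.vecMul (d i))
      simpa [smul_eq_mul] using this
    have hmv : K.mulVec x i = ∑ j, K.vecMul (d i) j * x j := by
      simp only [Matrix.mulVec, Matrix.vecMul, dotProduct, hd_def]
      apply Finset.sum_congr rfl
      intro j _
      congr 1
      simp [Finset.sum_ite_eq, Finset.mem_univ]
    rw [hmv]
    have : ∑ j, K.vecMul (d i) j * x j = - f (K.vecMul (d i)) := by
      rw [hexp, ← Finset.sum_neg_distrib]
      apply Finset.sum_congr rfl
      intro j _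
      simp [hx_def]
    rw [this]
    linarith
  rcases hor with h | h
  · exact Or.inl ⟨h, fun hb => hnotboth ⟨h, hb⟩⟩
  · exact Or.inr ⟨h, fun ha => hnotboth ⟨ha, h⟩⟩
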